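/- Let N = 2n+1 be odd and D the equispaced trigonometric differentiation matrix. Then the trace of D² equals -2 Σ_{m=1}^{n} m² = -n(n+1)(2n+1)/3. -/

import Mathlib

open Real

/-- The equispaced trigonometric differentiation matrix (real). -/
noncomputable def Dmat (N : ℕ) : Matrix (Fin N) (Fin N) ℝ := fun j k =>
  if j = k then 0
  else (-1 : ℝ) ^ (j.1 + k.1) / (2 * Real.sin (π * ((j.1 : ℝ) - (k.1 : ℝ)) / N))

section Helpers
open Finset

lemma geom_deriv_key (z : ℂ) (M : ℕ) :
    (z - 1) * ∑ j ∈ range M, (j : ℂ) * z ^ j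
      = ((M : ℂ) - 1) * z ^ M + 1 - ∑ j ∈ range M, z ^ j := by
  induction M with
  | zero => simp
  | succ M ih =>
    rw [sum_range_succ, sum_range_succ]
    push_cast
    linear_combination ih

lemma geom_deriv (N : ℕ) (z : ℂ) (hz : z ^ N = 1) (h1 : z ≠ 1) :
    (z - 1) * ∑ j ∈ range N, (j : ℂ) * z ^ j = N := by
  rw [geom_deriv_key, geom_sum_eq h1, hz]
  ring

lemma gauss1 (N : ℕ) : (∑ j ∈ range N, (j : ℂ)) * 2 = N * (N - 1) := by
  induction N with
  | zero => simp
  | succ N ih => rw [sum_range_succ]; push_cast; linear_combination ih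

lemma gauss2 (N : ℕ) : (∑ j ∈ range N, (j : ℂ) ^ 2) * 6 = N * (N - 1) * (2 * N - 1) := by
  induction N with
  | zero => simp
  | succ N ih => rw [sum_range_succ]; push_cast; linear_combination ih

lemma zeta_pow (N d : ℕ) :
    Complex.exp (2 * π * Complex.I / N) ^ d
      = Complex.exp ((2 * π * d / N : ℝ) * Complex.I) := by
  rw [← Complex.exp_nat_mul]
  push_cast
  ring_nf

lemma prod_formula (N d : ℕ) :
    (Complex.exp ((2 * π * d / N : ℝ) * Complex.I) - 1) *
      ((starRingEnd ℂ) (Complex.exp ((2 * π * d / N : ℝ) * Complex.I)) - 1)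
      = ((4 * Real.sin (π * d / N) ^ 2 : ℝ) : ℂ) := by
  set θ : ℝ := 2 * π * d / N with hθ
  have key : 4 * Real.sin (π * d / N) ^ 2 = (Real.cos θ - 1) ^ 2 + Real.sin θ ^ 2 := by
    have h2 : θ = 2 * (π * d / N) := by rw [hθ]; ring
    have hc := Real.cos_two_mul' (π * d / N)
    have hs := Real.sin_sq_add_cos_sq (π * d / N)
    have hs2 := Real.sin_sq_add_cos_sq θ
    rw [h2, hc] at *
    nlinarith [hs, hs2]
  rw [Complex.exp_mul_I, ← Complex.ofReal_cos, ← Complex.ofReal_sin, key]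
  simp only [map_add, map_sub, map_mul, Complex.conj_ofReal, Complex.conj_I]
  simp only [Complex.ofReal_add, Complex.ofReal_pow, Complex.ofReal_sub, Complex.ofReal_one]
  linear_combination (-(Real.sin θ : ℂ) ^ 2) * Complex.I_sq

lemma sin_pos_of (N d : ℕ) (hd : 0 < d) (hdN : d < N) : 0 < Real.sin (π * d / N) := by
  have hN : (0:ℝ) < N := by exact_mod_cast hd.trans hdN
  have hd' : (0:ℝ) < d := by exact_mod_cast hd
  apply Real.sin_pos_of_pos_of_lt_pi
  · exact div_pos (mul_pos Real.pi_pos hd') hN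
  · rw [div_lt_iff₀ hN]
    have : (d:ℝ) < N := by exact_mod_cast hdN
    nlinarith [Real.pi_pos]

lemma sum_csc_sq (N : ℕ) (hN : 0 < N) :
    ∑ d ∈ range N, (if d = 0 then (0:ℝ) else 1 / (4 * Real.sin (π * d / N) ^ 2))
      = ((N : ℝ) ^ 2 - 1) / 12 := by
  have hNC : (N : ℂ) ≠ 0 := Nat.cast_ne_zero.mpr hN.ne'
  set ζ : ℂ := Complex.exp (2 * π * Complex.I / N) with hζdef
  have hζ : IsPrimitiveRoot ζ N := Complex.isPrimitiveRoot_exp N hN.ne'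
  have hζN : ζ ^ N = 1 := hζ.pow_eq_one
  have hζ0 : ζ ≠ 0 := Complex.exp_ne_zero _
  set A : ℕ → ℂ := fun d => ∑ j ∈ range N, (j : ℂ) * (ζ ^ d) ^ j with hA
  have hconjA : ∀ d, (starRingEnd ℂ) (A d)
      = ∑ j ∈ range N, (j : ℂ) * (((starRingEnd ℂ) ζ) ^ d) ^ j := by
    intro d
    rw [hA]
    simp [map_sum]
  -- key1
  have key1 : ∀ d : ℕ, d < N → d ≠ 0 →
      Complex.ofReal (1 / (4 * Real.sin (π * d / N) ^ 2))
        = A d * (starRingEnd ℂ) (A d) / (N : ℂ) ^ 2 := by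
    intro d hdN hd0
    have hzN : (ζ ^ d) ^ N = 1 := by
      rw [← pow_mul, mul_comm, pow_mul, hζN, one_pow]
    have hz1 : ζ ^ d ≠ 1 := by
      intro h
      exact hd0 (hζ.pow_inj hdN hN (by rw [h, pow_zero]))
    have h1 : (ζ ^ d - 1) * A d = N := geom_deriv N (ζ ^ d) hzN hz1
    have h2 : ((starRingEnd ℂ) (ζ ^ d) - 1) * (starRingEnd ℂ) (A d) = N := by
      have := congrArg (starRingEnd ℂ) h1
      simpa [map_mul, map_sub] using this
    have hs : Real.sin (π * d / N) ≠ 0 :=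
      (sin_pos_of N d (Nat.pos_of_ne_zero hd0) hdN).ne'
    have hs4 : (4 * Real.sin (π * d / N) ^ 2) ≠ 0 := by positivity
    have hprod : (ζ ^ d - 1) * ((starRingEnd ℂ) (ζ ^ d) - 1)
        = Complex.ofReal (4 * Real.sin (π * d / N) ^ 2) := by
      rw [hζdef, zeta_pow]
      exact prod_formula N d
    set s : ℝ := 4 * Real.sin (π * d / N) ^ 2 with hsdef
    have hsC : (s : ℂ) ≠ 0 := Complex.ofReal_ne_zero.mpr hs4
    have hprods := congrArg₂ (· * ·) h1 h2
    have hmul : (s : ℂ) * (A d * (starRingEnd ℂ) (A d)) = (N : ℂ) ^ 2 := by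
      rw [← hprod]
      linear_combination hprods
    rw [Complex.ofReal_div, Complex.ofReal_one]
    rw [div_eq_div_iff hsC (pow_ne_zero 2 hNC), one_mul, ← hmul]
    ring
  -- conj ζ
  have hconjζ : (starRingEnd ℂ) ζ = ζ⁻¹ := by
    rw [hζdef, ← Complex.exp_conj, ← Complex.exp_neg]
    congr 1
    simp only [map_div₀, map_mul, Complex.conj_I, map_ofNat, Complex.conj_ofReal,
      Complex.conj_natCast]
    ring
  -- orthogonality
  have horth : ∀ j k : ℕ, j < N → k < N →
      ∑ d ∈ range N, (ζ ^ j * ((starRingEnd ℂ) ζ) ^ k) ^ d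
        = if j = k then (N : ℂ) else 0 := by
    intro j k hj hk
    rw [hconjζ]
    by_cases h : j = k
    · subst h
      rw [inv_pow, mul_inv_cancel₀ (pow_ne_zero j hζ0)]
      simp
    · have hw1 : ζ ^ j * (ζ⁻¹) ^ k ≠ 1 := by
        intro hw
        apply h
        apply hζ.pow_inj hj hk
        rw [inv_pow, mul_inv_eq_one₀ (pow_ne_zero k hζ0)] at hw
        exact hw
      have e1 : (ζ ^ j) ^ N = 1 := by rw [← pow_mul, mul_comm, pow_mul, hζN, one_pow]
      have e2 : ((ζ⁻¹) ^ k) ^ N = 1 := by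
        rw [← pow_mul, mul_comm, pow_mul, inv_pow, hζN, inv_one, one_pow]
      have hwN : (ζ ^ j * (ζ⁻¹) ^ k) ^ N = 1 := by
        rw [mul_pow, e1, e2, mul_one]
      rw [geom_sum_eq hw1, hwN]
      simp [h]
  -- key2
  have key2 : ∑ d ∈ range N, A d * (starRingEnd ℂ) (A d)
      = (N : ℂ) * ∑ j ∈ range N, (j : ℂ) ^ 2 := by
    have expand : ∀ d, A d * (starRingEnd ℂ) (A d)
        = ∑ j ∈ range N, ∑ k ∈ range N,
            ((j : ℂ) * k) * (ζ ^ j * ((starRingEnd ℂ) ζ) ^ k) ^ d := by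
      intro d
      rw [hA, hconjA, sum_mul_sum]
      refine Finset.sum_congr rfl fun j _ => Finset.sum_congr rfl fun k _ => ?_
      rw [mul_pow, pow_right_comm ζ j d, pow_right_comm ((starRingEnd ℂ) ζ) k d]
      ring
    calc ∑ d ∈ range N, A d * (starRingEnd ℂ) (A d)
        = ∑ d ∈ range N, ∑ j ∈ range N, ∑ k ∈ range N,
            ((j : ℂ) * k) * (ζ ^ j * ((starRingEnd ℂ) ζ) ^ k) ^ d := by
          exact Finset.sum_congr rfl fun d _ => expand d
      _ = ∑ j ∈ range N, ∑ k ∈ range N, ∑ d ∈ range N,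
            ((j : ℂ) * k) * (ζ ^ j * ((starRingEnd ℂ) ζ) ^ k) ^ d := by
          rw [Finset.sum_comm]
          exact Finset.sum_congr rfl fun j _ => Finset.sum_comm
      _ = ∑ j ∈ range N, ∑ k ∈ range N,
            ((j : ℂ) * k) * (if j = k then (N : ℂ) else 0) := by
          refine Finset.sum_congr rfl fun j hj => Finset.sum_congr rfl fun k hk => ?_
          rw [← Finset.mul_sum, horth j k (mem_range.mp hj) (mem_range.mp hk)]
      _ = (N : ℂ) * ∑ j ∈ range N, (j : ℂ) ^ 2 := by
          rw [Finset.mul_sum]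
          refine Finset.sum_congr rfl fun j hj => ?_
          rw [Finset.sum_congr rfl (fun k (_ : k ∈ range N) => by rw [mul_ite, mul_zero]),
            Finset.sum_ite_eq (range N) j (fun k => (j : ℂ) * k * N)]
          simp only [hj, if_true]
          ring
  -- A 0
  have hA0 : A 0 = ∑ j ∈ range N, (j : ℂ) := by
    rw [hA]; simp
  have hconjA0 : (starRingEnd ℂ) (A 0) = ∑ j ∈ range N, (j : ℂ) := by
    rw [hconjA]; simp
  -- main complex identity
  have h0mem : (0 : ℕ) ∈ range N := mem_range.mpr hN
  have main : Complex.ofReal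
      (∑ d ∈ range N, (if d = 0 then (0:ℝ) else 1 / (4 * Real.sin (π * d / N) ^ 2)))
      = Complex.ofReal (((N : ℝ) ^ 2 - 1) / 12) := by
    rw [Complex.ofReal_sum]
    have step1 : ∀ d ∈ range N,
        Complex.ofReal (if d = 0 then (0:ℝ) else 1 / (4 * Real.sin (π * d / N) ^ 2))
          = (if d = 0 then 0 else A d * (starRingEnd ℂ) (A d) / (N : ℂ) ^ 2) := by
      intro d hd
      by_cases h : d = 0
      · simp [h]
      · rw [if_neg h, if_neg h, key1 d (mem_range.mp hd) h]
    rw [Finset.sum_congr rfl step1]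
    have split : ∑ d ∈ range N, (if d = 0 then (0:ℂ) else A d * (starRingEnd ℂ) (A d) / (N : ℂ) ^ 2)
        = (∑ d ∈ range N, A d * (starRingEnd ℂ) (A d) / (N : ℂ) ^ 2)
          - A 0 * (starRingEnd ℂ) (A 0) / (N : ℂ) ^ 2 := by
      rw [← Finset.sum_erase_add (range N) _ h0mem, if_pos rfl,
        ← Finset.sum_erase_add (range N) (fun d => A d * (starRingEnd ℂ) (A d) / (N : ℂ) ^ 2) h0mem]
      rw [add_zero]
      rw [Finset.sum_congr rfl (fun d hd => if_neg (Finset.ne_of_mem_erase hd))]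
      ring
    rw [split, ← Finset.sum_div, key2, hconjA0, hA0]
    have e1 : (∑ j ∈ range N, (j : ℂ)) = N * (N - 1) / 2 := by
      linear_combination (gauss1 N) / 2
    have e2 : (∑ j ∈ range N, (j : ℂ) ^ 2) = N * (N - 1) * (2 * N - 1) / 6 := by
      linear_combination (gauss2 N) / 6
    rw [e1, e2]
    push_cast
    field_simp
    ring
  exact Complex.ofReal_inj.mp main

lemma fin_sub_shift (m : ℕ) (j k : Fin (m + 1)) :
    Real.sin (π * ((j.1 : ℝ) - k.1) / ((m + 1 : ℕ) : ℝ)) ^ 2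
      = Real.sin (π * (((j - k : Fin (m + 1)) : ℕ) : ℝ) / ((m + 1 : ℕ) : ℝ)) ^ 2 := by
  have hNR : ((m + 1 : ℕ) : ℝ) ≠ 0 := by positivity
  have hval : ((j - k : Fin (m + 1)) : ℕ) = ((m + 1) - k.1 + j.1) % (m + 1) := by
    rw [Fin.sub_def]
  set a : ℕ := (m + 1) - k.1 + j.1 with hadef
  set q : ℕ := a / (m + 1) with hqdef
  set r : ℕ := a % (m + 1) with hrdef
  have hk : k.1 ≤ m + 1 := le_of_lt k.isLt
  have hdm : (m + 1) * q + r = a := Nat.div_add_mod a (m + 1)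
  have h1 : (a : ℝ) = ((m + 1 : ℕ) : ℝ) - k.1 + j.1 := by
    rw [hadef]; push_cast [hk]; ring
  have h2 : (a : ℝ) = ((m + 1 : ℕ) : ℝ) * q + r := by exact_mod_cast congrArg (Nat.cast : ℕ → ℝ) hdm.symm
  have hcast : (j.1 : ℝ) - k.1 = (r : ℝ) + ((q : ℤ) - 1 : ℤ) * ((m + 1 : ℕ) : ℝ) := by
    push_cast at h1 h2 ⊢
    linear_combination h2 - h1
  have harg : π * ((j.1 : ℝ) - k.1) / ((m + 1 : ℕ) : ℝ)
      = π * (r : ℝ) / ((m + 1 : ℕ) : ℝ) + ((q : ℤ) - 1 : ℤ) * π := by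
    rw [hcast]
    field_simp
  rw [harg, Real.sin_add_int_mul_pi, hval]
  have hpm : ((-1 : ℝ) ^ ((q : ℤ) - 1)) = 1 ∨ ((-1 : ℝ) ^ ((q : ℤ) - 1)) = -1 :=
    ((q : ℤ) - 1).even_or_odd.imp (fun he => he.neg_one_zpow) (fun ho => ho.neg_one_zpow)
  rcases hpm with h | h <;> rw [h] <;> ring

lemma trace_formula (m : ℕ) :
    Matrix.trace ((Dmat (m + 1)) ^ 2)
      = -(((m + 1 : ℕ) : ℝ) * ((((m + 1 : ℕ) : ℝ) ^ 2 - 1) / 12)) := by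
  have hN : 0 < m + 1 := Nat.succ_pos m
  set H : ℕ → ℝ :=
    fun d => if d = 0 then 0 else 1 / (4 * Real.sin (π * d / ((m + 1 : ℕ) : ℝ)) ^ 2) with hH
  have hC1 : ∀ j k : Fin (m + 1),
      Dmat (m + 1) j k * Dmat (m + 1) k j = -(H ((j - k : Fin (m + 1)) : ℕ)) := by
    intro j k
    by_cases h : j = k
    · subst h
      simp [Dmat, hH]
    · have hne : (j - k : Fin (m + 1)) ≠ 0 := sub_ne_zero.mpr h
      have hd0 : ((j - k : Fin (m + 1)) : ℕ) ≠ 0 := by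
        intro h0
        exact hne (Fin.ext (by rw [h0, Fin.val_zero]))
      have hdN : ((j - k : Fin (m + 1)) : ℕ) < m + 1 := (j - k).isLt
      have hshift := fin_sub_shift m j k
      have hsinpos : 0 < Real.sin (π * (((j - k : Fin (m + 1)) : ℕ) : ℝ) / ((m + 1 : ℕ) : ℝ)) :=
        sin_pos_of (m + 1) _ (Nat.pos_of_ne_zero hd0) hdN
      have hs : Real.sin (π * ((j.1 : ℝ) - k.1) / ((m + 1 : ℕ) : ℝ)) ≠ 0 := by
        intro h0
        rw [h0] at hshift
        nlinarith
      have hpow : (-1 : ℝ) ^ (j.1 + k.1) * (-1 : ℝ) ^ (k.1 + j.1) = 1 := by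
        rw [Nat.add_comm k.1 j.1, ← pow_add, ← two_mul, pow_mul, neg_one_sq, one_pow]
      have hodd : Real.sin (π * ((k.1 : ℝ) - j.1) / ((m + 1 : ℕ) : ℝ))
          = -Real.sin (π * ((j.1 : ℝ) - k.1) / ((m + 1 : ℕ) : ℝ)) := by
        rw [← Real.sin_neg]
        congr 1
        ring
      have key : (2 * Real.sin (π * ((j.1 : ℝ) - k.1) / ((m + 1 : ℕ) : ℝ)))
            * (2 * -Real.sin (π * ((j.1 : ℝ) - k.1) / ((m + 1 : ℕ) : ℝ)))
          = -(4 * Real.sin (π * (((j - k : Fin (m + 1)) : ℕ) : ℝ) / ((m + 1 : ℕ) : ℝ)) ^ 2) := by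
        linear_combination (-4 : ℝ) * hshift
      simp only [Dmat, if_neg h, if_neg (Ne.symm h), hH, if_neg hd0]
      rw [hodd, div_mul_div_comm, hpow, key, div_neg]
  have htr : Matrix.trace ((Dmat (m + 1)) ^ 2)
      = ∑ j : Fin (m + 1), ∑ k : Fin (m + 1), Dmat (m + 1) j k * Dmat (m + 1) k j := by
    rw [pow_two, Matrix.trace]
    simp [Matrix.diag, Matrix.mul_apply]
  rw [htr]
  calc ∑ j : Fin (m + 1), ∑ k : Fin (m + 1), Dmat (m + 1) j k * Dmat (m + 1) k j
      = ∑ j : Fin (m + 1), ∑ k : Fin (m + 1), -(H ((j - k : Fin (m + 1)) : ℕ)) := by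
        exact Finset.sum_congr rfl fun j _ => Finset.sum_congr rfl fun k _ => hC1 j k
    _ = ∑ _j : Fin (m + 1), ∑ e : Fin (m + 1), -(H (e : ℕ)) := by
        refine Finset.sum_congr rfl fun j _ => ?_
        exact Equiv.sum_comp (Equiv.subLeft j) (fun e => -(H (e : ℕ)))
    _ = ((m + 1 : ℕ) : ℝ) * ∑ d ∈ range (m + 1), -(H d) := by
        rw [Fin.sum_univ_eq_sum_range (fun d => -(H d)) (m + 1), Finset.sum_const,
          Finset.card_univ, Fintype.card_fin, nsmul_eq_mul]
    _ = -(((m + 1 : ℕ) : ℝ) * ((((m + 1 : ℕ) : ℝ) ^ 2 - 1) / 12)) := by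
        rw [Finset.sum_neg_distrib, hH, sum_csc_sq (m + 1) hN]
        ring

lemma sum_sq_Icc (n : ℕ) :
    (∑ m ∈ Finset.Icc 1 n, (m : ℝ) ^ 2) * 6 = n * (n + 1) * (2 * n + 1) := by
  induction n with
  | zero => simp
  | succ n ih =>
    rw [Finset.sum_Icc_succ_top (Nat.le_add_left 1 n)]
    push_cast
    linear_combination ih

theorem trace_Dmat_sq (n : ℕ) :
    Matrix.trace ((Dmat (2 * n + 1)) ^ 2) = -2 * ∑ m ∈ Finset.Icc 1 n, (m : ℝ) ^ 2 ∧
    Matrix.trace ((Dmat (2 * n + 1)) ^ 2) = -(n * (n + 1) * (2 * n + 1) : ℝ) / 3 := by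
  have h := trace_formula (2 * n)
  have hs := sum_sq_Icc n
  constructor
  · rw [h]
    push_cast
    push_cast at hs
    linear_combination ((1:ℝ)/3) * hs
  · rw [h]
    push_cast
    ring

end Helpers
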